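/- Fix k ≥ 3 and ℓ ≥ 1. Let A be an LCM-k-free set of positive integers and let m be a positive integer. Then the family ℱ_m := { S ⊆ 𝒫(m) : |S| = ℓ and m = a·∏_{p∈S} p for some a ∈ A }, where 𝒫(m) denotes the set of prime divisors of m, is k-sunflower-free. -/

import Mathlib

open Filter

/-- A set of naturals contains an LCM-`k`-tuple: `k` distinct elements all of whose
pairwise least common multiples coincide. -/
def HasLCMTuple (k : ℕ) (A : Set ℕ) : Prop :=
  ∃ a : Fin k → ℕ, Function.Injective a ∧ (∀ i, a i ∈ A) ∧
    ∀ i j i' j' : Fin k, i ≠ j → i' ≠ j' → Nat.lcm (a i) (a j) = Nat.lcm (a i') (a j')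

/-- A set of naturals is LCM-`k`-free if it contains no LCM-`k`-tuple. -/
def LCMFree (k : ℕ) (A : Set ℕ) : Prop := ¬ HasLCMTuple k A

/-- A family of finite sets is `k`-sunflower-free: it contains no `k` distinct members
whose pairwise intersections all coincide. -/
def SunflowerFree {α : Type*} [DecidableEq α] (k : ℕ) (𝓕 : Set (Finset α)) : Prop :=
  ¬ ∃ S : Fin k → Finset α, Function.Injective S ∧ (∀ i, S i ∈ 𝓕) ∧
    ∀ i j i' j' : Fin k, i ≠ j → i' ≠ j' → S i ∩ S j = S i' ∩ S j'



lemma prodF {S : Finset ℕ} (hS : ∀ p ∈ S, p.Prime) (q : ℕ) :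
    (∏ p ∈ S, p).factorization q = if q ∈ S then 1 else 0 := by
  rw [Nat.factorization_prod (fun p hp => (hS p hp).pos.ne')]
  rw [Finsupp.finset_sum_apply]
  have : ∀ p ∈ S, (Nat.factorization p) q = if q = p then 1 else 0 := by
    intro p hp
    rw [(hS p hp).factorization, Finsupp.single_apply]
    simp [eq_comm]
  rw [Finset.sum_congr rfl this, Finset.sum_ite_eq]

lemma key (m : ℕ) (hm : 0 < m) (S T : Finset ℕ) (hS : S ⊆ m.primeFactors)
    (hT : T ⊆ m.primeFactors) (a b : ℕ) (ha0 : 0 < a) (hb0 : 0 < b)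
    (ha : m = a * ∏ p ∈ S, p) (hb : m = b * ∏ p ∈ T, p) :
    Nat.lcm a b * ∏ p ∈ S ∩ T, p = m := by
  have hSp : ∀ p ∈ S, p.Prime := fun p hp => Nat.prime_of_mem_primeFactors (hS hp)
  have hTp : ∀ p ∈ T, p.Prime := fun p hp => Nat.prime_of_mem_primeFactors (hT hp)
  have hIp : ∀ p ∈ S ∩ T, p.Prime := fun p hp => hSp p (Finset.mem_inter.1 hp).1
  have hI0 : (0:ℕ) < ∏ p ∈ S ∩ T, p := Finset.prod_pos fun p hp => (hIp p hp).pos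
  have hl0 : Nat.lcm a b ≠ 0 := Nat.lcm_ne_zero ha0.ne' hb0.ne'
  apply Nat.eq_of_factorization_eq (by positivity) hm.ne'
  intro p
  have h1 : m.factorization p = a.factorization p + (if p ∈ S then 1 else 0) := by
    rw [ha, Nat.factorization_mul ha0.ne' (Finset.prod_pos fun p hp => (hSp p hp).pos).ne',
      Finsupp.add_apply, prodF hSp]
  have h2 : m.factorization p = b.factorization p + (if p ∈ T then 1 else 0) := by
    rw [hb, Nat.factorization_mul hb0.ne' (Finset.prod_pos fun p hp => (hTp p hp).pos).ne',
      Finsupp.add_apply, prodF hTp]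
  rw [Nat.factorization_mul hl0 hI0.ne', Finsupp.add_apply, prodF hIp,
    Nat.factorization_lcm ha0.ne' hb0.ne', Finsupp.sup_apply]
  simp only [Finset.mem_inter]
  rcases Decidable.em (p ∈ S) with h | h <;> rcases Decidable.em (p ∈ T) with h' | h' <;>
    simp [h, h'] at h1 h2 ⊢ <;> omega

/-- Claim 4.1: for an LCM-`k`-free set `A` of positive integers and any positive
integer `m`, the family `ℱ_m` of `ℓ`-element sets `S` of prime divisors of `m` with
`m = a ∏_{p ∈ S} p` for some `a ∈ A` is `k`-sunflower-free. -/
theorem family_Fm_sunflowerFree (k ℓ : ℕ) (hk : 3 ≤ k) (hℓ : 1 ≤ ℓ)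
    (A : Set ℕ) (hApos : ∀ a ∈ A, 0 < a) (hA : LCMFree k A)
    (m : ℕ) (hm : 0 < m) :
    SunflowerFree k
      {S : Finset ℕ | S ⊆ m.primeFactors ∧ S.card = ℓ ∧
        ∃ a ∈ A, m = a * ∏ p ∈ S, p} := by
  rintro ⟨S, hSinj, hSmem, hsun⟩
  choose a haA hma using fun i => (hSmem i).2.2
  have ha0 : ∀ i, 0 < a i := fun i => hApos _ (haA i)
  have hsub : ∀ i, S i ⊆ m.primeFactors := fun i => (hSmem i).1
  have hkey : ∀ i j : Fin k,
      Nat.lcm (a i) (a j) * ∏ p ∈ S i ∩ S j, p = m := fun i j =>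
    key m hm _ _ (hsub i) (hsub j) _ _ (ha0 i) (ha0 j) (hma i) (hma j)
  apply hA
  refine ⟨a, ?_, haA, ?_⟩
  · intro i j hij
    by_contra hne
    apply hne
    apply hSinj
    have hp : (∏ p ∈ S i, p) = ∏ p ∈ S j, p :=
      Nat.eq_of_mul_eq_mul_left (ha0 i) (by rw [← hma i, hij, hma j])
    have e1 : (∏ p ∈ S i, p).primeFactors = S i :=
      Nat.primeFactors_prod (fun p hp => Nat.prime_of_mem_primeFactors (hsub i hp))
    have e2 : (∏ p ∈ S j, p).primeFactors = S j :=
      Nat.primeFactors_prod (fun p hp => Nat.prime_of_mem_primeFactors (hsub j hp))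
    rw [← e1, ← e2, hp]
  · intro i j i' j' hij hij'
    have hI : (0:ℕ) < ∏ p ∈ S i ∩ S j, p :=
      Finset.prod_pos fun p hp =>
        (Nat.prime_of_mem_primeFactors (hsub i (Finset.mem_inter.1 hp).1)).pos
    apply Nat.eq_of_mul_eq_mul_right hI
    rw [hkey i j, hsun i j i' j' hij hij', hkey i' j']
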